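/- Let M be a locally compact Hausdorff topological space, let φ be a semi-dynamical system on M with no start points, and let A ⊆ M be a compact, invariant, asymptotically stable attractor with domain of attraction D(A). Then A is a weak deformation retract of D(A): every open neighbourhood U of A in D(A) contains a set V with A ⊆ V ⊆ U such that V is a strong deformation retract of D(A). -/

import Mathlib

open unitInterval

/-- `φ` is a (global) semi-dynamical system (semi-flow) on `M`: a jointly continuous map
`[0,∞) × M → M` satisfying the identity and semi-group axioms. -/
def IsSemiFlow {M : Type*} [TopologicalSpace M] (φ : NNReal → M → M) : Prop :=
  Continuous (fun p : NNReal × M => φ p.1 p.2) ∧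
    (∀ x : M, φ 0 x = x) ∧
    ∀ (s t : NNReal) (x : M), φ s (φ t x) = φ (s + t) x

/-- `φ` has no start points: every point is `φ t y` for some `t > 0`. -/
def HasNoStartPoints {M : Type*} [TopologicalSpace M] (φ : NNReal → M → M) : Prop :=
  ∀ x : M, ∃ t : NNReal, 0 < t ∧ ∃ y : M, φ t y = x

/-- `A` is invariant under `φ`. -/
def IsInvariantSet {M : Type*} [TopologicalSpace M] (φ : NNReal → M → M) (A : Set M) : Prop :=
  ∀ t : NNReal, φ t '' A = A

/-- Lyapunov stability of `A` under `φ`. -/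
def IsLyapunovStable {M : Type*} [TopologicalSpace M] (φ : NNReal → M → M) (A : Set M) : Prop :=
  ∀ Uε : Set M, IsOpen Uε → A ⊆ Uε →
    ∃ Uδ : Set M, IsOpen Uδ ∧ A ⊆ Uδ ∧ Uδ ⊆ Uε ∧ ∀ t : NNReal, φ t '' Uδ ⊆ Uε

/-- The semi-flow initialized at `p` converges to `A`. -/
def AttractsFrom {M : Type*} [TopologicalSpace M] (φ : NNReal → M → M) (A : Set M)
    (p : M) : Prop :=
  ∀ V : Set M, IsOpen V → A ⊆ V → ∃ T : NNReal, ∀ t : NNReal, T ≤ t → φ t p ∈ V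

/-- Local attractivity of `A` under `φ`. -/
def IsLocallyAttractive {M : Type*} [TopologicalSpace M] (φ : NNReal → M → M)
    (A : Set M) : Prop :=
  ∃ W : Set M, IsOpen W ∧ A ⊆ W ∧ ∀ p ∈ W, AttractsFrom φ A p

/-- `A` is a compact, invariant, (locally) asymptotically stable attractor under `φ`. -/
def IsAsymptoticallyStableAttractor {M : Type*} [TopologicalSpace M] (φ : NNReal → M → M)
    (A : Set M) : Prop :=
  IsCompact A ∧ IsInvariantSet φ A ∧ IsLyapunovStable φ A ∧ IsLocallyAttractive φ A

/-- The domain of attraction of `A` under `φ`. -/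
def domainOfAttraction {M : Type*} [TopologicalSpace M] (φ : NNReal → M → M)
    (A : Set M) : Set M :=
  {p : M | AttractsFrom φ A p}

/-- `A` is a strong deformation retract of `X`. -/
def IsStrongDeformationRetract {X : Type*} [TopologicalSpace X] (A : Set X) : Prop :=
  ∃ H : X × I → X, Continuous H ∧ (∀ x : X, H (x, 0) = x) ∧ (∀ x : X, H (x, 1) ∈ A) ∧
    ∀ a ∈ A, ∀ s : I, H (a, s) = a

/-- The inclusion `A ↪ X` is a cofibration: it has the homotopy extension property with
respect to every topological space `Y`. -/
def InclusionIsCofibration {X : Type*} [TopologicalSpace X] (A : Set X) : Prop :=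
  ∀ (Y : Type*) [TopologicalSpace Y] (g : X → Y) (h : ↥A × I → Y),
    Continuous g → Continuous h → (∀ a : A, h (a, 0) = g (a : X)) →
      ∃ G : X × I → Y, Continuous G ∧ (∀ x : X, G (x, 0) = g x) ∧
        ∀ (a : A) (s : I), G ((a : X), s) = h (a, s)

/-- **Moulay–Bhat.** A compact, invariant, asymptotically stable attractor `A` on a locally
compact Hausdorff space with no start points is a weak deformation retract of its domain of
attraction `D(A)`: every open neighbourhood `U` of `A` in `D(A)` contains a set `V ⊇ A` that
is a strong deformation retract of `D(A)`. -/
theorem weakDeformationRetract_of_attractor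
    {M : Type*} [TopologicalSpace M] [WeaklyLocallyCompactSpace M] [T2Space M]
    (φ : NNReal → M → M) (hφ : IsSemiFlow φ) (hsp : HasNoStartPoints φ)
    (A : Set M) (hA : IsAsymptoticallyStableAttractor φ A) :
    ∀ U : Set ↥(domainOfAttraction φ A), IsOpen U → Subtype.val ⁻¹' A ⊆ U →
      ∃ V : Set ↥(domainOfAttraction φ A),
        Subtype.val ⁻¹' A ⊆ V ∧ V ⊆ U ∧ IsStrongDeformationRetract V := by
  classical
  obtain ⟨hc, h0, hadd⟩ := hφ
  obtain ⟨hAcomp, hAinv, hAstab, -⟩ := hA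
  have hφt : ∀ t : NNReal, Continuous (φ t) := fun t =>
    hc.comp (continuous_const.prodMk continuous_id)
  set D := domainOfAttraction φ A with hD
  -- `A` is contained in the domain of attraction
  have hAD : A ⊆ D := by
    intro a ha V hVopen hAV
    exact ⟨0, fun t _ => hAV (by rw [← hAinv t]; exact ⟨a, ha, rfl⟩)⟩
  -- `D` is positively invariant
  have hDinv : ∀ x ∈ D, ∀ u : NNReal, φ u x ∈ D := by
    intro x hx u V hVopen hAV
    obtain ⟨T, hT⟩ := hx V hVopen hAV
    exact ⟨T, fun t ht => by rw [hadd]; exact hT (t + u) (ht.trans le_self_add)⟩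
  have hDmem : ∀ x ∈ D, AttractsFrom φ A x := fun x hx => hx
  clear_value D
  intro U hUopen hAU
  -- extract an open set `U'` of `M` inducing `U`
  obtain ⟨U', hU'open, hU'⟩ := isOpen_induced_iff.mp hUopen
  have hAU' : A ⊆ U' := by
    intro a ha
    have : (⟨a, hAD ha⟩ : ↥D) ∈ U := hAU ha
    rw [← hU'] at this; exact this
  -- compact neighbourhood of `A` inside `U'`
  obtain ⟨C, hCcomp, hCint, hCU'⟩ := exists_compact_between hAcomp hU'open hAU'
  -- Lyapunov stability: open `O` whose forward orbit stays in `interior C`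
  obtain ⟨O, hOopen, hAO, hOC, hOinv⟩ := hAstab (interior C) isOpen_interior hCint
  -- the forward saturation of `O` and its compact closure `K`
  set Γ : Set M := ⋃ s : NNReal, φ s '' O with hΓ
  set K : Set M := closure Γ with hK
  have hΓC : Γ ⊆ C := Set.iUnion_subset fun s => (hOinv s).trans interior_subset
  have hKC : K ⊆ C := closure_minimal hΓC hCcomp.isClosed
  have hKU' : K ⊆ U' := hKC.trans hCU'
  have hKcomp : IsCompact K := hCcomp.of_isClosed_subset isClosed_closure hKC
  have hΓmem : ∀ (s : NNReal) (y), y ∈ O → φ s y ∈ Γ := fun s y hy =>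
    Set.mem_iUnion.2 ⟨s, ⟨y, hy, rfl⟩⟩
  have hΓK : Γ ⊆ K := subset_closure
  have hAK : A ⊆ K := fun a ha => hΓK (by
    have := hΓmem 0 a (hAO ha); rwa [h0] at this)
  have hKinv : ∀ (t : NNReal) (x), x ∈ K → φ t x ∈ K := by
    intro t x hx
    have h1 : φ t '' Γ ⊆ Γ := by
      rintro - ⟨y, hy, rfl⟩
      obtain ⟨s, z, hz, rfl⟩ : ∃ s z, z ∈ O ∧ φ s z = y := by
        obtain ⟨s', hs'⟩ := Set.mem_iUnion.1 hy
        obtain ⟨z, hz, hzy⟩ := hs'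
        exact ⟨s', z, hz, hzy⟩
      rw [hadd]
      exact hΓmem (t + s) z hz
    have h2 : φ t '' K ⊆ K :=
      (image_closure_subset_closure_image (hφt t)).trans (closure_mono h1)
    exact h2 ⟨x, hx, rfl⟩
  clear_value Γ K
  -- Urysohn function: 0 on K, 1 outside U'
  obtain ⟨f, hf0, hf1, hf01⟩ :=
    exists_continuous_zero_one_of_isCompact hKcomp hU'open.isClosed_compl
      (Set.disjoint_left.mpr fun x hxK hxc => hxc (hKU' hxK))
  -- the family `F t x = exp t * f (φ t x)`
  obtain ⟨F, hFdef⟩ : ∃ F : NNReal → M → ℝ,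
      ∀ (t : NNReal) (x : M), F t x = Real.exp t * f (φ t x) :=
    ⟨fun t x => Real.exp t * f (φ t x), fun _ _ => rfl⟩
  have hFcont : Continuous fun p : NNReal × M => F p.1 p.2 := by
    simp only [hFdef]
    exact (Real.continuous_exp.comp (NNReal.continuous_coe.comp continuous_fst)).mul
      (f.continuous.comp hc)
  have hFcty : ∀ y, Continuous fun t => F t y := by
    intro y
    simp only [hFdef]
    have h1 : Continuous fun t : NNReal => φ t y :=
      hc.comp (continuous_id.prodMk continuous_const)
    exact (Real.continuous_exp.comp NNReal.continuous_coe).mul (f.continuous.comp h1)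
  have hFctx : ∀ t : NNReal, Continuous fun y => F t y := by
    intro t
    simp only [hFdef]
    exact continuous_const.mul (f.continuous.comp (hφt t))
  have hF0 : ∀ (t : NNReal) (x), 0 ≤ F t x := fun t x => by
    rw [hFdef]
    exact mul_nonneg (Real.exp_pos _).le (hf01 _).1
  have hFK : ∀ (t : NNReal) (x), φ t x ∈ K → F t x = 0 := by
    intro t x hx
    rw [hFdef, hf0 hx]
    simp
  -- the Lyapunov function `L x = ⨆ t, F t x`
  obtain ⟨L, hLdef⟩ : ∃ L : M → ℝ, ∀ x, L x = ⨆ t : NNReal, F t x :=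
    ⟨fun x => ⨆ t : NNReal, F t x, fun _ => rfl⟩
  -- absorption: near any point of `D`, orbits are eventually (uniformly) in `K`
  have habs : ∀ x ∈ D, ∃ T₀ : NNReal, ∃ N' : Set M, IsOpen N' ∧ x ∈ N' ∧
      ∀ y ∈ N', ∀ t : NNReal, T₀ ≤ t → φ t y ∈ K := by
    intro x hx
    obtain ⟨T₀, hT₀⟩ := hDmem x hx O hOopen hAO
    refine ⟨T₀, (fun y => φ T₀ y) ⁻¹' O, hOopen.preimage (hφt T₀), hT₀ T₀ le_rfl, ?_⟩
    intro y hy t ht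
    have h1 : φ t y = φ (t - T₀) (φ T₀ y) := by rw [hadd, tsub_add_cancel_of_le ht]
    rw [h1]
    exact hΓK (hΓmem (t - T₀) _ hy)
  -- if the orbit of `y` lies in `K` after time `T₀`, the sup is a max over `[0, T₀]`
  have hkey : ∀ (T₀ : NNReal) (y : M), (∀ t : NNReal, T₀ ≤ t → φ t y ∈ K) →
      BddAbove (Set.range fun t => F t y) ∧
        L y = sSup ((fun t => F t y) '' Set.Icc 0 T₀) := by
    intro T₀ y hy
    have hS : IsCompact (Set.Icc (0:NNReal) T₀) := isCompact_Icc
    have hSne : (Set.Icc (0:NNReal) T₀).Nonempty := ⟨0, le_rfl, zero_le⟩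
    have himg : IsCompact ((fun t => F t y) '' Set.Icc 0 T₀) := hS.image (hFcty y)
    have hbddimg := himg.bddAbove
    have hbdd : BddAbove (Set.range fun t => F t y) := by
      have hsub : (Set.range fun t => F t y) ⊆
          insert 0 ((fun t => F t y) '' Set.Icc 0 T₀) := by
        rintro - ⟨t, rfl⟩
        rcases le_or_gt t T₀ with ht | ht
        · exact Set.mem_insert_of_mem _ ⟨t, ⟨zero_le, ht⟩, rfl⟩
        · simp only [hFK t y (hy t ht.le)]; exact Set.mem_insert _ _
      exact (hbddimg.insert 0).mono hsub
    rw [hLdef]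
    refine ⟨hbdd, le_antisymm ?_ ?_⟩
    · apply ciSup_le
      intro t
      rcases le_or_gt t T₀ with ht | ht
      · exact le_csSup hbddimg ⟨t, ⟨zero_le, ht⟩, rfl⟩
      · have h1 : F T₀ y = 0 := hFK T₀ y (hy T₀ le_rfl)
        have h2 : F t y = 0 := hFK t y (hy t ht.le)
        have h3 : (0:ℝ) ≤ sSup ((fun t => F t y) '' Set.Icc 0 T₀) := by
          conv_lhs => rw [← h1]
          exact le_csSup hbddimg ⟨T₀, ⟨zero_le, le_rfl⟩, rfl⟩
        exact h2.le.trans h3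
    · apply csSup_le (hSne.image _)
      rintro - ⟨t, -, rfl⟩
      exact le_ciSup hbdd t
  have hbddD : ∀ x ∈ D, BddAbove (Set.range fun t => F t x) := by
    intro x hx
    obtain ⟨T₀, N', -, hxN', hN'⟩ := habs x hx
    exact (hkey T₀ x (hN' x hxN')).1
  -- basic properties of `L`
  have hfleL : ∀ x ∈ D, f x ≤ L x := by
    intro x hx
    have h1 : F 0 x = f x := by rw [hFdef, h0 x]; simp
    rw [hLdef, ← h1]
    exact le_ciSup (hbddD x hx) 0
  have hLnonneg : ∀ x ∈ D, 0 ≤ L x := fun x hx =>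
    le_trans (hf01 x).1 (hfleL x hx)
  have hLA : ∀ a ∈ A, L a = 0 := by
    intro a ha
    have h1 : ∀ t : NNReal, F t a = 0 := fun t =>
      hFK t a (hAK (by rw [← hAinv t]; exact ⟨a, ha, rfl⟩))
    rw [hLdef, funext h1]
    exact ciSup_const
  have hLdec : ∀ x ∈ D, ∀ u : NNReal, L (φ u x) ≤ Real.exp (-(u:ℝ)) * L x := by
    intro x hx u
    rw [hLdef]
    apply ciSup_le
    intro t
    show F t (φ u x) ≤ _
    have h1 : F t (φ u x) = Real.exp (-(u:ℝ)) * F (t + u) x := by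
      rw [hFdef, hFdef, hadd, NNReal.coe_add, ← mul_assoc, ← Real.exp_add]
      ring_nf
    rw [h1, hLdef]
    exact mul_le_mul_of_nonneg_left (le_ciSup (hbddD x hx) (t + u)) (Real.exp_pos _).le
  -- continuity of `L` on `D`
  have hLcont : ∀ x ∈ D, ContinuousAt L x := by
    intro x hx
    obtain ⟨T₀, N', hN'open, hxN', hN'⟩ := habs x hx
    obtain ⟨G, hGdef⟩ : ∃ G : M → ℝ,
        ∀ y, G y = sSup ((fun t => F t y) '' Set.Icc 0 T₀) :=
      ⟨_, fun _ => rfl⟩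
    have hEq : ∀ y ∈ N', L y = G y := fun y hy =>
      ((hkey T₀ y (hN' y hy)).2).trans (hGdef y).symm
    have hS : IsCompact (Set.Icc (0:NNReal) T₀) := isCompact_Icc
    have hSne : (Set.Icc (0:NNReal) T₀).Nonempty := ⟨0, le_rfl, zero_le⟩
    have hbddimg : ∀ y, BddAbove ((fun t => F t y) '' Set.Icc 0 T₀) := fun y =>
      (hS.image (hFcty y)).bddAbove
    have hGle : ∀ y, ∀ t ∈ Set.Icc (0:NNReal) T₀, F t y ≤ G y := by
      intro y t htS
      rw [hGdef]
      exact le_csSup (hbddimg y) ⟨t, htS, rfl⟩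
    have hGcont : ContinuousAt G x := by
      rw [ContinuousAt]
      apply tendsto_order.2
      constructor
      · -- lower semicontinuity at x
        intro a ha
        obtain ⟨t₀, ht₀S, ht₀max⟩ := hS.exists_isMaxOn hSne ((hFcty x).continuousOn)
        have hGx : G x = F t₀ x := by
          rw [hGdef]
          refine le_antisymm (csSup_le (hSne.image _) ?_)
            (le_csSup (hbddimg x) ⟨t₀, ht₀S, rfl⟩)
          rintro - ⟨t, htS, rfl⟩
          exact ht₀max htS
        have haF : a < F t₀ x := by rw [← hGx]; exact ha
        have hopen : IsOpen {y | a < F t₀ y} := isOpen_lt continuous_const (hFctx t₀)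
        filter_upwards [hopen.mem_nhds haF] with y hy
        exact lt_of_lt_of_le hy (hGle y t₀ ht₀S)
      · -- upper semicontinuity at x
        intro a ha
        obtain ⟨b, hGb, hba⟩ : ∃ b : ℝ, G x < b ∧ b < a :=
          ⟨(G x + a) / 2, by linarith, by linarith⟩
        have hsub : Set.Icc (0:NNReal) T₀ ×ˢ ({x} : Set M) ⊆
            {p : NNReal × M | F p.1 p.2 < b} := by
          rintro ⟨t, y⟩ ⟨htS, hy⟩
          have hy' : y = x := hy
          show F t y < b
          rw [hy']
          exact lt_of_le_of_lt (hGle x t htS) hGb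
        have hopen2 : IsOpen {p : NNReal × M | F p.1 p.2 < b} :=
          isOpen_lt hFcont continuous_const
        obtain ⟨w, v, hw, hv, hSw, hxv, hwv⟩ :=
          generalized_tube_lemma hS isCompact_singleton hopen2 hsub
        filter_upwards [hv.mem_nhds (hxv rfl)] with y hy
        have hGyb : G y ≤ b := by
          rw [hGdef]
          apply csSup_le (hSne.image _)
          rintro - ⟨t, htS, rfl⟩
          have h5 : F t y < b := hwv (Set.mk_mem_prod (hSw htS) hy)
          exact h5.le
        exact lt_of_le_of_lt hGyb hba
    exact hGcont.congr (Filter.eventuallyEq_of_mem (hN'open.mem_nhds hxN') hEq).symm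
  -- the retraction time
  obtain ⟨τ, hτdef⟩ : ∃ τ : M → ℝ, ∀ y, τ y = Real.log (max 1 (2 * L y)) :=
    ⟨_, fun _ => rfl⟩
  have hmaxpos : ∀ y, (0:ℝ) < max 1 (2 * L y) := fun y =>
    lt_of_lt_of_le one_pos (le_max_left _ _)
  have hτnonneg : ∀ y, 0 ≤ τ y := fun y => by
    rw [hτdef]
    exact Real.log_nonneg (le_max_left _ _)
  have hτcont : ∀ x ∈ D, ContinuousAt τ x := by
    intro x hx
    have h1 : ContinuousAt (fun y => max 1 (2 * L y)) x :=
      continuousAt_const.max (continuousAt_const.mul (hLcont x hx))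
    have h2 : ContinuousAt (Real.log ∘ fun y => max 1 (2 * L y)) x :=
      ContinuousAt.comp (Real.continuousAt_log (hmaxpos x).ne') h1
    exact h2.congr (Filter.Eventually.of_forall fun y => (hτdef y).symm)
  have hτzero : ∀ y, L y ≤ 1/2 → τ y = 0 := by
    intro y hy
    have h1 : max 1 (2 * L y) = 1 := max_eq_left (by linarith)
    rw [hτdef, h1, Real.log_one]
  -- flowing for time `τ x` lands in the sublevel set `{L ≤ 1/2}`
  have hland : ∀ x ∈ D, L (φ (Real.toNNReal (τ x)) x) ≤ 1/2 := by
    intro x hx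
    have hu : ((Real.toNNReal (τ x)) : ℝ) = τ x := Real.coe_toNNReal _ (hτnonneg x)
    have h1 := hLdec x hx (Real.toNNReal (τ x))
    rw [hu] at h1
    have hexp : Real.exp (-(τ x)) = (max 1 (2 * L x))⁻¹ := by
      rw [hτdef, Real.exp_neg, Real.exp_log (hmaxpos x)]
    rw [hexp] at h1
    rcases le_or_gt (2 * L x) 1 with h | h
    · have hmax : max 1 (2 * L x) = 1 := max_eq_left h
      rw [hmax] at h1
      simp only [inv_one, one_mul] at h1
      linarith
    · have hmax : max 1 (2 * L x) = 2 * L x := max_eq_right h.le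
      rw [hmax] at h1
      have hLpos : 0 < L x := by linarith
      have h2 : (2 * L x)⁻¹ * L x = 1/2 := by field_simp
      rw [h2] at h1
      exact h1
  -- the set `V` and the deformation retraction
  refine ⟨{x : ↥D | L ↑x ≤ 1/2}, ?_, ?_, ?_⟩
  · intro x hx
    show L ↑x ≤ 1/2
    rw [hLA ↑x hx]
    norm_num
  · intro x hxV
    rw [← hU']
    show (x : M) ∈ U'
    by_contra hxc
    have h1 : f ↑x = 1 := hf1 hxc
    have h2 : f ↑x ≤ L ↑x := hfleL ↑x x.2
    have h3 : L ↑x ≤ 1/2 := hxV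
    rw [h1] at h2
    linarith
  · refine ⟨fun p => ⟨φ (Real.toNNReal ((p.2 : ℝ) * τ ↑p.1)) ↑p.1,
      hDinv ↑p.1 p.1.2 _⟩, ?_, ?_, ?_, ?_⟩
    · -- continuity
      have hτD : Continuous fun x : ↥D => τ ↑x :=
        continuous_iff_continuousAt.2 fun x =>
          (hτcont ↑x x.2).comp continuous_subtype_val.continuousAt
      apply Continuous.subtype_mk
      exact hc.comp
        ((continuous_real_toNNReal.comp
          ((continuous_subtype_val.comp continuous_snd).mul
            (hτD.comp continuous_fst))).prodMk
          (continuous_subtype_val.comp continuous_fst))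
    · intro x
      apply Subtype.ext
      show φ (Real.toNNReal (((0:I) : ℝ) * τ ↑x)) ↑x = ↑x
      norm_num
      exact h0 _
    · intro x
      show L (φ (Real.toNNReal (((1:I) : ℝ) * τ ↑x)) ↑x) ≤ 1/2
      have h1 : ((1:I) : ℝ) * τ ↑x = τ ↑x := by norm_num
      rw [h1]
      exact hland ↑x x.2
    · intro a haV s
      apply Subtype.ext
      show φ (Real.toNNReal ((s : ℝ) * τ ↑a)) ↑a = ↑a
      rw [hτzero ↑a haV, mul_zero]
      norm_num
      exact h0 _
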